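/- For positive integers m and n with 3n - 1 ≤ m, the partial sum ∑_{l=0}^{n} C(m, l) is at most 2 C(m, n). -/

import Mathlib

theorem geom_two_sum_aux (k : ℕ) : ∑ l ∈ Finset.range k, 2 ^ l = 2 ^ k - 1 := by
  induction k with
  | zero => simp
  | succ k ih =>
    rw [Finset.sum_range_succ, ih]
    have : 1 ≤ 2 ^ k := Nat.one_le_two_pow
    omega

/-- For positive integers `m`, `n` with `3n - 1 ≤ m`,
`∑_{l=0}^{n} C(m, l) ≤ 2 C(m, n)`. -/
theorem sum_choose_le_two_choose (m n : ℕ) (hn : 0 < n) (hm : 0 < m)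
    (h : 3 * n - 1 ≤ m) :
    ∑ l ∈ Finset.range (n + 1), m.choose l ≤ 2 * m.choose n := by
  have step : ∀ k : ℕ, k + 1 ≤ n → 2 * m.choose k ≤ m.choose (k + 1) := by
    intro k hk
    have h1 : m.choose (k + 1) * (k + 1) = m.choose k * (m - k) :=
      Nat.choose_succ_right_eq m k
    have h2 : 2 * (k + 1) ≤ m - k := by omega
    have h3 : (2 * m.choose k) * (k + 1) ≤ m.choose (k + 1) * (k + 1) := by
      rw [h1]
      calc (2 * m.choose k) * (k + 1) = m.choose k * (2 * (k + 1)) := by ring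
        _ ≤ m.choose k * (m - k) := Nat.mul_le_mul_left _ h2
    exact Nat.le_of_mul_le_mul_right h3 (by omega)
  have pow : ∀ d l : ℕ, l + d = n → 2 ^ d * m.choose l ≤ m.choose n := by
    intro d
    induction d with
    | zero => intro l hl; simp [show l = n by omega]
    | succ d ih =>
      intro l hl
      calc 2 ^ (d + 1) * m.choose l = 2 ^ d * (2 * m.choose l) := by ring
        _ ≤ 2 ^ d * m.choose (l + 1) :=
            Nat.mul_le_mul_left _ (step l (by omega))
        _ ≤ m.choose n := ih (l + 1) (by omega)
  have key : ∀ l ∈ Finset.range (n + 1),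
      2 ^ n * m.choose l ≤ 2 ^ l * m.choose n := by
    intro l hl
    have hl' : l ≤ n := by simpa [Nat.lt_succ_iff] using hl
    calc 2 ^ n * m.choose l = 2 ^ l * (2 ^ (n - l) * m.choose l) := by
          rw [← mul_assoc, ← pow_add]; congr 2; omega
      _ ≤ 2 ^ l * m.choose n :=
          Nat.mul_le_mul_left _ (pow (n - l) l (by omega))
  have geom : ∑ l ∈ Finset.range (n + 1), 2 ^ l = 2 ^ (n + 1) - 1 :=
    geom_two_sum_aux (n + 1)
  have main : 2 ^ n * ∑ l ∈ Finset.range (n + 1), m.choose l ≤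
      2 ^ n * (2 * m.choose n) := by
    calc 2 ^ n * ∑ l ∈ Finset.range (n + 1), m.choose l
        = ∑ l ∈ Finset.range (n + 1), 2 ^ n * m.choose l := by
          rw [Finset.mul_sum]
      _ ≤ ∑ l ∈ Finset.range (n + 1), 2 ^ l * m.choose n :=
          Finset.sum_le_sum key
      _ = (2 ^ (n + 1) - 1) * m.choose n := by
          rw [← Finset.sum_mul, geom]
      _ ≤ 2 ^ (n + 1) * m.choose n :=
          Nat.mul_le_mul_right _ (Nat.sub_le _ _)
      _ = 2 ^ n * (2 * m.choose n) := by ring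
  exact Nat.le_of_mul_le_mul_left main (Nat.pow_pos (by norm_num : 0 < 2))
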